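/- arXiv:1607.06372 — 3 statements merged into one kernel-verified Lean document; each statement's English description precedes it below -/
import Mathlib

section
/- Let γ, D, ζ > 0 and κ ∈ (0, ζ²). Define σ_s² = ζ²/(2(ζ²/κ−1)), σ_a² = ζ²/(2ζ²/κ−1), C_s = γD·ζ³/(2σ_s²+ζ²)^{3/2} and C_a = γD·ζ²/(σ_a²+ζ²). Then C_a > C_s > 0. -/
theorem Ca_gt_Cs_gt_zero (γ D ζ κ : ℝ) (hγ : 0 < γ) (hD : 0 < D) (hζ : 0 < ζ)
    (hκ : 0 < κ) (hκζ : κ < ζ^2) :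
    γ * D * ζ^2 / (ζ^2 / (2 * ζ^2 / κ - 1) + ζ^2) >
        γ * D * ζ^3 / (2 * (ζ^2 / (2 * (ζ^2 / κ - 1))) + ζ^2) ^ ((3 : ℝ) / 2) ∧
      γ * D * ζ^3 / (2 * (ζ^2 / (2 * (ζ^2 / κ - 1))) + ζ^2) ^ ((3 : ℝ) / 2) > 0 := by
  have hκ' : κ ≠ 0 := ne_of_gt hκ
  set a : ℝ := ζ^2 / κ with ha_def
  have ha : 1 < a := (one_lt_div hκ).mpr hκζ
  have ha1 : (0:ℝ) < a - 1 := by linarith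
  have ha0 : (0:ℝ) < a := by linarith
  have h2a : (0:ℝ) < 2*a - 1 := by linarith
  have hζ2 : (0:ℝ) < ζ^2 := by positivity
  have hDs : 2 * (ζ^2 / (2 * (a - 1))) + ζ^2 = ζ^2 * (a / (a - 1)) := by
    field_simp; ring
  have hDa : ζ^2 / (2 * ζ^2 / κ - 1) + ζ^2 = ζ^2 * (2*a / (2*a - 1)) := by
    have h2 : 2 * ζ^2 / κ - 1 = 2*a - 1 := by rw [ha_def]; ring
    rw [h2]; field_simp; ring
  set x : ℝ := (a - 1) / a with hx_def
  have hx0 : 0 < x := div_pos ha1 ha0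
  have hx1 : x < 1 := (div_lt_one ha0).mpr (by linarith)
  have hr : a / (a - 1) = x⁻¹ := by rw [hx_def, inv_div]
  have hz3 : (ζ^2) ^ ((3:ℝ)/2) = ζ^3 := by
    rw [← Real.rpow_natCast ζ 2, ← Real.rpow_mul hζ.le]
    norm_num
  have hP : 0 < x ^ ((3:ℝ)/2) := Real.rpow_pos_of_pos hx0 _
  have hpow : (2 * (ζ^2 / (2 * (a - 1))) + ζ^2) ^ ((3:ℝ)/2)
      = ζ^3 * (x ^ ((3:ℝ)/2))⁻¹ := by
    rw [hDs, hr, Real.mul_rpow hζ2.le (by positivity), hz3, Real.inv_rpow hx0.le]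
  have hCs : γ * D * ζ^3 / (ζ^3 * (x ^ ((3:ℝ)/2))⁻¹) = γ * D * x ^ ((3:ℝ)/2) := by
    field_simp
  have hCa : γ * D * ζ^2 / (ζ^2 * (2*a/(2*a-1))) = γ * D * ((1+x)/2) := by
    rw [hx_def]; field_simp; ring
  rw [hpow, hCs, hDa, hCa]
  have hlt : x ^ ((3:ℝ)/2) < x := by
    calc x ^ ((3:ℝ)/2) < x ^ (1:ℝ) :=
          Real.rpow_lt_rpow_of_exponent_gt hx0 hx1 (by norm_num)
      _ = x := Real.rpow_one x
  have hγD : 0 < γ * D := mul_pos hγ hD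
  constructor
  · have : x ^ ((3:ℝ)/2) < (1+x)/2 := by linarith
    exact mul_lt_mul_of_pos_left this hγD
  · positivity
end

section
/- For σ, ζ > 0, the double integral I₂ = ∫∫_{ℝ²} (ψ/σ²)·(φ−ψ)·G_ζ(φ−ψ)·F_{σ,0}(ψ)·F_{σ,0}(φ) dφ dψ equals −ζ³/(2σ²+ζ²)^{3/2}, where G_ζ(u) = exp(−u²/(2ζ²)). -/
open MeasureTheory

/-- Scaled Gaussian interaction kernel. -/
noncomputable def Gzeta (ζ u : ℝ) : ℝ := Real.exp (-u^2 / (2 * ζ^2))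

/-- Gaussian density with mean `μ` and standard deviation `s`. -/
noncomputable def gaussF (s μ φ : ℝ) : ℝ :=
  (1 / (Real.sqrt (2 * Real.pi) * s)) * Real.exp (-(φ - μ)^2 / (2 * s^2))

open Real in

lemma gauss_one {b : ℝ} (hb : 0 < b) : ∫ x : ℝ, x * Real.exp (-b * x^2) = 0 := by
  have h := MeasureTheory.integral_neg_eq_self (fun x : ℝ => x * Real.exp (-b * x^2)) volume
  simp only [neg_sq, neg_mul] at h
  rw [integral_neg] at h
  simp only [neg_mul]
  linarith

lemma gauss_sq_integrable {b : ℝ} (hb : 0 < b) :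
    Integrable (fun x : ℝ => x^2 * Real.exp (-b * x^2)) := by
  have h := integrable_rpow_mul_exp_neg_mul_sq hb (s := 2) (by norm_num)
  refine h.congr (Filter.Eventually.of_forall fun x => ?_)
  simp [Real.rpow_natCast]

lemma gauss_two {b : ℝ} (hb : 0 < b) :
    ∫ x : ℝ, x^2 * Real.exp (-b * x^2) = Real.sqrt (Real.pi / b) / (2*b) := by
  have hb2 : (2*b) ≠ 0 := by positivity
  have hv : ∀ x : ℝ, HasDerivAt (fun x : ℝ => -Real.exp (-b * x^2) / (2*b))
      (x * Real.exp (-b * x^2)) x := by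
    intro x
    have h1 : HasDerivAt (fun x : ℝ => -b * x^2) (-b * (2*x)) x := by
      simpa using ((hasDerivAt_pow 2 x).const_mul (-b))
    have h3 := (h1.exp).neg.div_const (2*b)
    refine h3.congr_deriv ?_
    rw [div_eq_iff hb2]
    ring
  have hu : ∀ x : ℝ, HasDerivAt (fun x : ℝ => x) 1 x := fun x => hasDerivAt_id x
  have huv' : Integrable ((fun x : ℝ => x) * (fun x : ℝ => x * Real.exp (-b * x^2))) := by
    refine (gauss_sq_integrable hb).congr (Filter.Eventually.of_forall fun x => ?_)
    simp [Pi.mul_apply]; ring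
  have hu'v : Integrable ((fun _ : ℝ => (1:ℝ)) * (fun x : ℝ => -Real.exp (-b * x^2) / (2*b))) := by
    refine (((integrable_exp_neg_mul_sq hb).neg).div_const (2*b)).congr
      (Filter.Eventually.of_forall fun x => ?_)
    simp [Pi.mul_apply]
  have huv : Integrable ((fun x : ℝ => x) * (fun x : ℝ => -Real.exp (-b * x^2) / (2*b))) := by
    refine (((integrable_mul_exp_neg_mul_sq hb).neg).div_const (2*b)).congr
      (Filter.Eventually.of_forall fun x => ?_)
    simp [Pi.mul_apply]; ring
  have key := integral_mul_deriv_eq_deriv_mul_of_integrable (fun x _ => hu x) (fun x _ => hv x) huv' hu'v huv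
  have e1 : (∫ x : ℝ, x * (x * Real.exp (-b * x^2))) = ∫ x : ℝ, x^2 * Real.exp (-b * x^2) := by
    congr 1; funext x; ring
  have e2 : (∫ x : ℝ, (1:ℝ) * (-Real.exp (-b * x^2) / (2*b)))
      = -(∫ x : ℝ, Real.exp (-b * x^2)) / (2*b) := by
    rw [show (fun x : ℝ => (1:ℝ) * (-Real.exp (-b * x^2) / (2*b)))
        = fun x : ℝ => (-Real.exp (-b * x^2)) / (2*b) from funext fun x => by ring,
      integral_div, integral_neg]
  rw [e1, e2, integral_gaussian] at key
  rw [key]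
  ring

lemma gauss_lin {b : ℝ} (hb : 0 < b) (c : ℝ) :
    ∫ x : ℝ, (x + c) * Real.exp (-b * x^2) = c * Real.sqrt (Real.pi / b) := by
  simp_rw [add_mul]
  rw [integral_add (integrable_mul_exp_neg_mul_sq hb) ((integrable_exp_neg_mul_sq hb).const_mul c),
    gauss_one hb, integral_const_mul c _, integral_gaussian, zero_add]

open Real in
theorem I2_integral (σ ζ : ℝ) (hσ : 0 < σ) (hζ : 0 < ζ) :
    (∫ ψ : ℝ, ∫ φ : ℝ,
        (ψ / σ^2) * (φ - ψ) * Gzeta ζ (φ - ψ) * gaussF σ 0 ψ * gaussF σ 0 φ) =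
      -ζ^3 / (2 * σ^2 + ζ^2) ^ ((3 : ℝ) / 2) := by
  have hπ : (0:ℝ) < Real.pi := Real.pi_pos
  have hT : (0:ℝ) < σ^2 + ζ^2 := by positivity
  have hW : (0:ℝ) < 2*σ^2 + ζ^2 := by positivity
  have ha : (0:ℝ) < (σ^2 + ζ^2) / (2*σ^2*ζ^2) := by positivity
  have hB : (0:ℝ) < (2*σ^2 + ζ^2) / (2*σ^2*(σ^2+ζ^2)) := by positivity
  set a : ℝ := (σ^2 + ζ^2) / (2*σ^2*ζ^2) with ha_def
  set B : ℝ := (2*σ^2 + ζ^2) / (2*σ^2*(σ^2+ζ^2)) with hB_def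
  set D : ℝ := -(ζ^2/(σ^2+ζ^2)) * (1/(2*Real.pi*σ^4)) * Real.sqrt (Real.pi / a) with hD_def
  have inner_eq : ∀ ψ : ℝ,
      (∫ φ : ℝ, (ψ / σ^2) * (φ - ψ) * Gzeta ζ (φ - ψ) * gaussF σ 0 ψ * gaussF σ 0 φ)
      = D * (ψ^2 * Real.exp (-B * ψ^2)) := by
    intro ψ
    set m : ℝ := ψ * σ^2 / (σ^2 + ζ^2) with hm_def
    have key : ∀ φ : ℝ, (ψ / σ^2) * (φ - ψ) * Gzeta ζ (φ - ψ) * gaussF σ 0 ψ * gaussF σ 0 φ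
        = ((ψ / σ^2) * (1/(2*Real.pi*σ^2)) * Real.exp (-B * ψ^2)) *
          (((φ - m) + (m - ψ)) * Real.exp (-a * (φ - m)^2)) := by
      intro φ
      simp only [Gzeta, gaussF, sub_zero]
      have hexp : Real.exp (-(φ - ψ)^2 / (2*ζ^2)) * (Real.exp (-ψ^2 / (2*σ^2)) *
          Real.exp (-φ^2 / (2*σ^2)))
          = Real.exp (-B * ψ^2) * Real.exp (-a * (φ - m)^2) := by
        simp only [← Real.exp_add]
        congr 1
        rw [hB_def, ha_def, hm_def]
        field_simp
        ring
      have hs : Real.sqrt (2*Real.pi) ^ 2 = 2*Real.pi := Real.sq_sqrt (by positivity)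
      have hsne : Real.sqrt (2*Real.pi) ≠ 0 := by positivity
      calc (ψ / σ^2) * (φ - ψ) * Real.exp (-(φ - ψ)^2 / (2*ζ^2)) *
            ((1 / (Real.sqrt (2*Real.pi) * σ)) * Real.exp (-ψ^2 / (2*σ^2))) *
            ((1 / (Real.sqrt (2*Real.pi) * σ)) * Real.exp (-φ^2 / (2*σ^2)))
          = (ψ / σ^2) * (φ - ψ) * (1 / (Real.sqrt (2*Real.pi) * σ) * (1 / (Real.sqrt (2*Real.pi) * σ))) *
            (Real.exp (-(φ - ψ)^2 / (2*ζ^2)) * (Real.exp (-ψ^2 / (2*σ^2)) * Real.exp (-φ^2 / (2*σ^2)))) := by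
            ring
        _ = (ψ / σ^2) * (φ - ψ) * (1 / (Real.sqrt (2*Real.pi) * σ) * (1 / (Real.sqrt (2*Real.pi) * σ))) *
            (Real.exp (-B * ψ^2) * Real.exp (-a * (φ - m)^2)) := by rw [hexp]
        _ = ((ψ / σ^2) * (1/(2*Real.pi*σ^2)) * Real.exp (-B * ψ^2)) *
            (((φ - m) + (m - ψ)) * Real.exp (-a * (φ - m)^2)) := by
            rw [← hs]
            field_simp
            rw [Real.sqrt_sq (Real.sqrt_nonneg _)]
            ring
    rw [integral_congr_ae (Filter.Eventually.of_forall key), integral_const_mul,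
      show (∫ φ : ℝ, ((φ - m) + (m - ψ)) * Real.exp (-a * (φ - m)^2))
        = ∫ x : ℝ, (x + (m - ψ)) * Real.exp (-a * x^2) from
        integral_sub_right_eq_self (fun x => (x + (m - ψ)) * Real.exp (-a * x^2)) m,
      gauss_lin ha (m - ψ), hD_def, hm_def]
    field_simp
    ring
  rw [show (fun ψ : ℝ => ∫ φ : ℝ,
        (ψ / σ^2) * (φ - ψ) * Gzeta ζ (φ - ψ) * gaussF σ 0 ψ * gaussF σ 0 φ)
      = fun ψ : ℝ => D * (ψ^2 * Real.exp (-B * ψ^2)) from funext inner_eq,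
    integral_const_mul D _, gauss_two hB]
  -- final arithmetic
  have hsT : Real.sqrt (σ^2+ζ^2) ^ 2 = σ^2+ζ^2 := Real.sq_sqrt hT.le
  have hsW : Real.sqrt (2*σ^2+ζ^2) ^ 2 = 2*σ^2+ζ^2 := Real.sq_sqrt hW.le
  have hs2π : Real.sqrt (2*Real.pi) ^ 2 = 2*Real.pi := Real.sq_sqrt (by positivity)
  have hsTpos : 0 < Real.sqrt (σ^2+ζ^2) := Real.sqrt_pos.mpr hT
  have hsWpos : 0 < Real.sqrt (2*σ^2+ζ^2) := Real.sqrt_pos.mpr hW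
  have hs2πpos : 0 < Real.sqrt (2*Real.pi) := Real.sqrt_pos.mpr (by positivity)
  have h1 : Real.sqrt (Real.pi / a)
      = Real.sqrt (2*Real.pi) * σ * ζ / Real.sqrt (σ^2+ζ^2) := by
    rw [show Real.pi / a = (Real.sqrt (2*Real.pi) * σ * ζ / Real.sqrt (σ^2+ζ^2))^2 by
      rw [div_pow, mul_pow, mul_pow, hs2π, hsT, ha_def]; field_simp]
    exact Real.sqrt_sq (by positivity)
  have h2 : Real.sqrt (Real.pi / B)
      = Real.sqrt (2*Real.pi) * σ * Real.sqrt (σ^2+ζ^2) / Real.sqrt (2*σ^2+ζ^2) := by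
    rw [show Real.pi / B = (Real.sqrt (2*Real.pi) * σ * Real.sqrt (σ^2+ζ^2) / Real.sqrt (2*σ^2+ζ^2))^2 by
      rw [div_pow, mul_pow, mul_pow, hs2π, hsT, hsW, hB_def]; field_simp]
    exact Real.sqrt_sq (by positivity)
  have h3 : (2*σ^2+ζ^2) ^ ((3:ℝ)/2) = Real.sqrt (2*σ^2+ζ^2) ^ 3 := by
    rw [Real.sqrt_eq_rpow, ← Real.rpow_natCast ((2*σ^2+ζ^2) ^ ((1:ℝ)/2)) 3,
      ← Real.rpow_mul hW.le]
    norm_num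
  rw [hD_def, h1, h2, h3, hB_def,
    show Real.sqrt (2*σ^2+ζ^2)^3 = (2*σ^2+ζ^2) * Real.sqrt (2*σ^2+ζ^2) from by
      rw [pow_succ, hsW]]
  have hπ2 : Real.pi = Real.sqrt (2*Real.pi)^2 / 2 := by rw [hs2π]; ring
  rw [hπ2]
  field_simp
  rw [Real.sqrt_sq (Real.sqrt_nonneg _)]
end

section
/- For σ, ζ > 0, the convolution identity G_ζ * ((∂_φ(G_ζ*F_{σ,0}))·F_{σ,0}/(G_ζ*F_{σ,0})) = (σ²/(σ²+ζ²))·∂_φ(G_ζ*F_{σ,0}) holds pointwise on ℝ, where G_ζ(u)=exp(−u²/(2ζ²)) and F_{σ,0} is the centered Gaussian with standard deviation σ. -/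
open MeasureTheory

/-- Convolution (in the opinion variable) of the kernel `Gzeta ζ` with the
centered Gaussian of standard deviation `σ`. -/
noncomputable def GconvF (ζ σ : ℝ) (φ : ℝ) : ℝ :=
  ∫ y : ℝ, Gzeta ζ (φ - y) * gaussF σ 0 y

lemma integral_gaussian_shift (b c : ℝ) :
    ∫ x : ℝ, Real.exp (-b * (x - c)^2) = Real.sqrt (Real.pi / b) := by
  rw [show (fun x : ℝ => Real.exp (-b * (x - c)^2))
      = fun x : ℝ => (fun u : ℝ => Real.exp (-b * u^2)) (x - c) from rfl]
  rw [integral_sub_right_eq_self (fun u : ℝ => Real.exp (-b * u^2)) c]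
  exact integral_gaussian b

lemma integral_x_gaussian (b : ℝ) :
    ∫ x : ℝ, x * Real.exp (-b * x^2) = 0 := by
  have h := integral_neg_eq_self (fun x : ℝ => x * Real.exp (-b * x^2)) volume
  simp only [neg_sq, neg_mul, integral_neg] at h
  simp only [neg_mul]
  linarith

lemma integral_x_gaussian_shift (b c : ℝ) (hb : 0 < b) :
    ∫ x : ℝ, x * Real.exp (-b * (x - c)^2) = c * Real.sqrt (Real.pi / b) := by
  have h : (fun x : ℝ => x * Real.exp (-b * (x - c)^2))
      = fun x : ℝ => (fun u : ℝ => (u + c) * Real.exp (-b * u^2)) (x - c) := by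
    funext x; simp [sub_add_cancel]
  rw [h, integral_sub_right_eq_self (fun u : ℝ => (u + c) * Real.exp (-b * u^2)) c]
  have h1 : Integrable (fun u : ℝ => u * Real.exp (-b * u^2)) :=
    integrable_mul_exp_neg_mul_sq hb
  have h2 : Integrable (fun u : ℝ => c * Real.exp (-b * u^2)) :=
    (integrable_exp_neg_mul_sq hb).const_mul c
  have h3 : (fun u : ℝ => (u + c) * Real.exp (-b * u^2))
      = fun u : ℝ => u * Real.exp (-b * u^2) + c * Real.exp (-b * u^2) := by
    funext u; ring
  rw [h3, integral_add h1 h2, integral_x_gaussian, integral_const_mul,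
    integral_gaussian]
  ring

theorem convolution_identity_nonsymmetric (σ ζ : ℝ) (hσ : 0 < σ) (hζ : 0 < ζ) :
    ∀ φ : ℝ,
      (∫ y : ℝ,
          Gzeta ζ (φ - y) *
            (deriv (GconvF ζ σ) y * gaussF σ 0 y / GconvF ζ σ y)) =
        (σ^2 / (σ^2 + ζ^2)) * deriv (GconvF ζ σ) φ := by
  intro φ
  set s2 : ℝ := σ^2 + ζ^2 with hs2
  have hs2pos : 0 < s2 := by positivity
  have hb : 0 < s2 / (2 * σ^2 * ζ^2) := by positivity
  set b : ℝ := s2 / (2 * σ^2 * ζ^2) with hbdef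
  have hpi : (0:ℝ) < Real.pi := Real.pi_pos
  -- value of the Gaussian normalization
  have hsq : Real.sqrt (Real.pi / b) = Real.sqrt (2*Real.pi) * σ * ζ / Real.sqrt s2 := by
    have h1 : Real.pi / b = (2*Real.pi) * σ^2 * ζ^2 / s2 := by
      rw [hbdef]; field_simp
    rw [h1, Real.sqrt_div (by positivity), Real.sqrt_mul (by positivity),
      Real.sqrt_mul (by positivity), Real.sqrt_sq hσ.le, Real.sqrt_sq hζ.le]
  -- pointwise completion of square
  have key : ∀ x y : ℝ, Gzeta ζ (x - y) * gaussF σ 0 y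
      = (1 / (Real.sqrt (2 * Real.pi) * σ)) * Real.exp (-x^2 / (2 * s2))
        * Real.exp (-b * (y - σ^2 * x / s2)^2) := by
    intro x y
    unfold Gzeta gaussF
    rw [mul_assoc, mul_comm (Real.exp (-(x-y)^2 / (2*ζ^2))), ← mul_assoc, mul_assoc,
      mul_assoc, ← Real.exp_add, ← Real.exp_add]
    congr 1
    rw [hbdef, hs2]
    congr 1
    field_simp
    ring
  -- closed form of GconvF
  have hC : GconvF ζ σ = fun x => (ζ / Real.sqrt s2) * Real.exp (-x^2 / (2 * s2)) := by
    funext x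
    unfold GconvF
    simp_rw [key x]
    rw [integral_const_mul, integral_gaussian_shift, hsq]
    have h2π : Real.sqrt (2*Real.pi) ≠ 0 := by positivity
    have hss : Real.sqrt s2 ≠ 0 := by positivity
    field_simp
  -- derivative of GconvF
  have hderiv : ∀ x : ℝ, deriv (GconvF ζ σ) x = -(x/s2) * GconvF ζ σ x := by
    intro x
    have h1 : HasDerivAt (fun u : ℝ => -u^2/(2*s2)) (-(2*x)/(2*s2)) x := by
      simpa using ((hasDerivAt_pow 2 x).neg.div_const (2*s2))
    have h2 : HasDerivAt (fun u : ℝ => (ζ / Real.sqrt s2) * Real.exp (-u^2/(2*s2)))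
        ((ζ / Real.sqrt s2) * (Real.exp (-x^2/(2*s2)) * (-(2*x)/(2*s2)))) x :=
      (h1.exp).const_mul _
    rw [hC]
    rw [h2.deriv]
    have : (2:ℝ) * s2 ≠ 0 := by positivity
    field_simp
  -- positivity of GconvF
  have hCpos : ∀ x : ℝ, GconvF ζ σ x ≠ 0 := by
    intro x
    rw [hC]
    positivity
  -- simplify the integrand
  have hint : ∀ y : ℝ, Gzeta ζ (φ - y) *
      (deriv (GconvF ζ σ) y * gaussF σ 0 y / GconvF ζ σ y)
      = (-(1/s2) * ((1 / (Real.sqrt (2 * Real.pi) * σ)) * Real.exp (-φ^2 / (2 * s2))))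
        * (y * Real.exp (-b * (y - σ^2 * φ / s2)^2)) := by
    intro y
    have h1 : deriv (GconvF ζ σ) y * gaussF σ 0 y / GconvF ζ σ y
        = -(y/s2) * gaussF σ 0 y := by
      rw [hderiv y]
      field_simp [hCpos y]
    rw [h1]
    have h2 := key φ y
    calc Gzeta ζ (φ - y) * (-(y/s2) * gaussF σ 0 y)
        = -(y/s2) * (Gzeta ζ (φ - y) * gaussF σ 0 y) := by ring
      _ = -(y/s2) * ((1 / (Real.sqrt (2 * Real.pi) * σ)) * Real.exp (-φ^2 / (2 * s2))
            * Real.exp (-b * (y - σ^2 * φ / s2)^2)) := by rw [h2]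
      _ = _ := by ring
  simp_rw [hint]
  rw [integral_const_mul, integral_x_gaussian_shift b _ hb, hsq, hderiv φ, hC]
  simp only []
  have h2π : Real.sqrt (2*Real.pi) ≠ 0 := by positivity
  have hss : Real.sqrt s2 ≠ 0 := by positivity
  field_simp
end
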